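/- Consider the four-node DC power-flow network with nodes s, l, r, t, lines s–l of susceptance a > 0, s–r of susceptance b > 0, l–t of susceptance c > 0, r–t of susceptance c, a power injection of 2 at node s and a withdrawal of 2 at node t. Then there exist phase angles θ_s, θ_l, θ_r, θ_t ∈ ℝ such that the line flows f_{sl} = a(θ_s − θ_l), f_{sr} = b(θ_s − θ_r), f_{lt} = c(θ_l − θ_t), f_{rt} = c(θ_r − θ_t) satisfy conservation at every node (f_{sl} + f_{sr} = 2, f_{sl} = f_{lt}, f_{sr} = f_{rt}, f_{lt} + f_{rt} = 2) together with the capacity constraints |f_{lt}| ≤ 1 and |f_{rt}| ≤ 1, if and only if a = b. -/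

import Mathlib

/-- In the four-node reduction gadget (injection 2 at `s`, withdrawal 2 at `t`,
source-side lines of susceptances `a` and `b`, two capacity-1 lines of susceptance `c`),
a feasible DC power flow exists if and only if the two source-side groups are
balanced, i.e. `a = b`. -/
theorem gadget_feasible_iff_balanced
    (a b c : ℝ) (ha : 0 < a) (hb : 0 < b) (hc : 0 < c) :
    (∃ θs θl θr θt : ℝ,
        a * (θs - θl) + b * (θs - θr) = 2 ∧
        a * (θs - θl) = c * (θl - θt) ∧
        b * (θs - θr) = c * (θr - θt) ∧
        c * (θl - θt) + c * (θr - θt) = 2 ∧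
        |c * (θl - θt)| ≤ 1 ∧
        |c * (θr - θt)| ≤ 1) ↔ a = b := by
  constructor
  · rintro ⟨θs, θl, θr, θt, h1, h2, h3, h4, h5, h6⟩
    -- each capacity-1 flow must equal 1
    have hx : c * (θl - θt) = 1 := by
      have := abs_le.mp h5
      have := abs_le.mp h6
      linarith [this.1, this.2]
    have hy : c * (θr - θt) = 1 := by linarith
    have hlr : θl = θr := by
      have : c * (θl - θr) = 0 := by ring_nf; nlinarith
      have := mul_eq_zero.mp this
      rcases this with h | h
      · exact absurd h (ne_of_gt hc)
      · linarith
    have ha1 : a * (θs - θl) = 1 := by rw [h2]; exact hx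
    have hb1 : b * (θs - θl) = 1 := by rw [hlr, h3]; exact hy
    have hne : θs - θl ≠ 0 := by
      intro h
      rw [h, mul_zero] at ha1
      norm_num at ha1
    have := ha1.trans hb1.symm
    exact mul_right_cancel₀ hne this
  · rintro rfl
    refine ⟨1 / c + 1 / a, 1 / c, 1 / c, 0, ?_, ?_, ?_, ?_, ?_, ?_⟩ <;>
      field_simp <;> first | ring1 | norm_num
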